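/- Let c : ℤ → ℤ → ℂ satisfy: (i) c(k,k) ≠ 0 for every integer k ≠ 0; (ii) c(k,m) = 0 whenever m > k; (iii) c(0,m) = 0 for every integer m. Let S be the set of functions a : ℤ → ℂ whose support is bounded below and which satisfy, for every k ∈ ℤ, ∑_{m∈ℤ} a(m)·c(k,m) = 0. Then S is a ℂ-linear subspace of the space of functions ℤ → ℂ of dimension exactly 1, and moreover every nonzero a ∈ S satisfies a(m) = 0 for all m < 0 and a(0) ≠ 0. -/

import Mathlib

/-- The recursively defined canonical solution, as a sequence on `ℕ`. -/
noncomputable def a0seq (c : ℤ → ℤ → ℂ) : ℕ → ℂ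
  | 0 => 1
  | (n+1) => -(∑ m ∈ (Finset.range (n+1)).attach,
      a0seq c m.1 * c (↑(n+1)) (↑m.1)) / c (n+1) (n+1)
decreasing_by exact Finset.mem_range.mp m.2

/-- The canonical solution as a function on `ℤ`. -/
noncomputable def a0fun (c : ℤ → ℤ → ℂ) : ℤ → ℂ :=
  fun z => if z < 0 then 0 else a0seq c z.toNat

lemma a0fun_neg (c : ℤ → ℤ → ℂ) {m : ℤ} (hm : m < 0) : a0fun c m = 0 := by
  simp [a0fun, hm]

lemma a0fun_zero (c : ℤ → ℤ → ℂ) : a0fun c 0 = 1 := by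
  simp [a0fun, a0seq]

lemma a0fun_natCast (c : ℤ → ℤ → ℂ) (n : ℕ) : a0fun c (n : ℤ) = a0seq c n := by
  simp [a0fun]

lemma a0fun_rec (c : ℤ → ℤ → ℂ) {k : ℤ} (hk : 0 < k) (hck : c k k ≠ 0) :
    a0fun c k * c k k = -∑ m ∈ Finset.Icc 0 (k - 1), a0fun c m * c k m := by
  obtain ⟨n, rfl⟩ : ∃ n : ℕ, k = (n : ℤ) + 1 := by
    refine ⟨(k - 1).toNat, by omega⟩
  have h1 : a0fun c ((n : ℤ) + 1) = a0seq c (n + 1) := by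
    have : ((n : ℤ) + 1) = ((n + 1 : ℕ) : ℤ) := by push_cast; ring
    rw [this, a0fun_natCast]
  have hmap : Finset.Icc (0 : ℤ) ((n : ℤ) + 1 - 1) =
      Finset.map ⟨((↑) : ℕ → ℤ), Nat.cast_injective⟩ (Finset.range (n + 1)) := by
    ext x
    simp only [Finset.mem_Icc, Finset.mem_map, Finset.mem_range,
      Function.Embedding.coeFn_mk]
    constructor
    · rintro ⟨hx0, hxn⟩
      exact ⟨x.toNat, by omega, by omega⟩
    · rintro ⟨a, ha, rfl⟩
      omega
  rw [h1, hmap, Finset.sum_map]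
  simp only [Function.Embedding.coeFn_mk]
  have hsum : ∑ m ∈ Finset.range (n + 1), a0fun c (m : ℤ) * c ((n : ℤ) + 1) (m : ℤ)
      = ∑ m ∈ (Finset.range (n + 1)).attach,
          a0seq c m.1 * c (↑(n + 1)) (↑m.1) := by
    rw [← Finset.sum_attach (Finset.range (n + 1))
      (fun m => a0fun c (m : ℤ) * c ((n : ℤ) + 1) (m : ℤ))]
    refine Finset.sum_congr rfl fun m _ => ?_
    rw [a0fun_natCast]
    push_cast
    ring_nf
  rw [hsum]
  have hck' : c (↑(n + 1)) (↑(n + 1)) ≠ 0 := by push_cast at hck ⊢; exact hck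
  show a0seq c (n + 1) * c ((n : ℤ) + 1) ((n : ℤ) + 1) = _
  rw [a0seq]
  push_cast
  field_simp

theorem casimir_uniqueness
    (c : ℤ → ℤ → ℂ)
    (h1 : ∀ k : ℤ, k ≠ 0 → c k k ≠ 0)
    (h2 : ∀ k m : ℤ, k < m → c k m = 0)
    (h3 : ∀ m : ℤ, c 0 m = 0) :
    ∃ W : Submodule ℂ (ℤ → ℂ),
      (W : Set (ℤ → ℂ)) =
        {a : ℤ → ℂ | (∃ N : ℤ, ∀ m : ℤ, m < N → a m = 0) ∧
          ∀ k : ℤ, ∑ᶠ m : ℤ, a m * c k m = 0} ∧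
      Module.rank ℂ W = 1 ∧
      ∀ a : ℤ → ℂ, a ∈ W → a ≠ 0 → (∀ m : ℤ, m < 0 → a m = 0) ∧ a 0 ≠ 0 := by
  -- finsum reduces to a finite sum over `Icc N k`
  have fin_eq : ∀ (a : ℤ → ℂ) (N k : ℤ), (∀ m, m < N → a m = 0) →
      ∑ᶠ m : ℤ, a m * c k m = ∑ m ∈ Finset.Icc N k, a m * c k m := by
    intro a N k ha
    apply finsum_eq_sum_of_support_subset
    intro m hm
    simp only [Function.mem_support] at hm
    have hmN : N ≤ m := by
      by_contra h
      exact hm (by rw [ha m (by omega)]; ring)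
    have hmk : m ≤ k := by
      by_contra h
      exact hm (by rw [h2 k m (by omega)]; ring)
    simp [Finset.mem_Icc]
    omega
  set S : Set (ℤ → ℂ) :=
    {a : ℤ → ℂ | (∃ N : ℤ, ∀ m : ℤ, m < N → a m = 0) ∧
      ∀ k : ℤ, ∑ᶠ m : ℤ, a m * c k m = 0} with hS
  -- the key step lemma: if a solution vanishes below k (k ≠ 0) then it vanishes at k
  have step : ∀ a ∈ S, ∀ k : ℤ, k ≠ 0 → (∀ m, m < k → a m = 0) → a k = 0 := by
    intro a ha k hk hb
    have h := ha.2 k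
    rw [fin_eq a k k hb] at h
    rw [Finset.Icc_self, Finset.sum_singleton] at h
    exact (mul_eq_zero.mp h).resolve_right (h1 k hk)
  -- any solution vanishes in negative degrees
  have hneg : ∀ a ∈ S, ∀ m : ℤ, m < 0 → a m = 0 := by
    intro a ha m hm
    obtain ⟨N, hN⟩ := ha.1
    have key : ∀ n : ℕ, ∀ m : ℤ, m < 0 → m < N + n → a m = 0 := by
      intro n
      induction n with
      | zero => intro m hm0 hmn; exact hN m (by omega)
      | succ n ih =>
        intro m hm0 hmn
        by_cases hcase : m < N + n
        · exact ih m hm0 hcase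
        · have hm' : m = N + n := by omega
          exact step a ha m (by omega) (fun j hj => ih j (by omega) (by omega))
    exact key (m - N + 1).toNat m hm (by omega)
  -- a solution with a 0 = 0 is identically zero
  have hzero : ∀ a ∈ S, a 0 = 0 → a = 0 := by
    intro a ha h0
    have key : ∀ n : ℕ, ∀ m : ℤ, m < (n : ℤ) → a m = 0 := by
      intro n
      induction n with
      | zero => intro m hm; exact hneg a ha m (by exact_mod_cast hm)
      | succ n ih =>
        intro m hm
        by_cases hcase : m < (n : ℤ)
        · exact ih m hcase
        · have hm' : m = (n : ℤ) := by omega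
          by_cases hm0 : m = 0
          · rw [hm0]; exact h0
          · exact step a ha m hm0 (fun j hj => by
              by_cases hj0 : j < 0
              · exact hneg a ha j hj0
              · exact ih j (by omega))
    funext m
    exact key (m + 1).toNat m (by omega)
  -- the canonical solution belongs to S
  have ha0 : a0fun c ∈ S := by
    constructor
    · exact ⟨0, fun m hm => a0fun_neg c hm⟩
    · intro k
      rcases lt_trichotomy k 0 with hk | hk | hk
      · apply finsum_eq_zero_of_forall_eq_zero
        intro m
        by_cases hm : m < 0
        · rw [a0fun_neg c hm]; ring
        · rw [h2 k m (by omega)]; ring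
      · subst hk
        apply finsum_eq_zero_of_forall_eq_zero
        intro m
        rw [h3 m]; ring
      · rw [fin_eq (a0fun c) 0 k (fun m hm => a0fun_neg c hm)]
        have hins : Finset.Icc (0 : ℤ) k = insert k (Finset.Icc 0 (k - 1)) := by
          ext x; simp [Finset.mem_Icc, Finset.mem_insert]; omega
        rw [hins, Finset.sum_insert (by simp)]
        rw [a0fun_rec c hk (h1 k (by omega))]
        ring
  have hadd : ∀ a b : ℤ → ℂ, a ∈ S → b ∈ S → a + b ∈ S := by
    rintro a b ⟨⟨Na, hNa⟩, hea⟩ ⟨⟨Nb, hNb⟩, heb⟩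
    refine ⟨⟨min Na Nb, fun m hm => ?_⟩, fun k => ?_⟩
    · simp only [Pi.add_apply]
      rw [hNa m (by omega), hNb m (by omega)]; ring
    · have hda : ∀ m, m < min Na Nb → a m = 0 := fun m hm => hNa m (by omega)
      have hdb : ∀ m, m < min Na Nb → b m = 0 := fun m hm => hNb m (by omega)
      have hdab : ∀ m, m < min Na Nb → (a + b) m = 0 := fun m hm => by
        simp only [Pi.add_apply]; rw [hda m hm, hdb m hm]; ring
      rw [fin_eq (a + b) (min Na Nb) k hdab]
      have h1' := hea k; rw [fin_eq a (min Na Nb) k hda] at h1'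
      have h2' := heb k; rw [fin_eq b (min Na Nb) k hdb] at h2'
      simp only [Pi.add_apply, add_mul]
      rw [Finset.sum_add_distrib, h1', h2', add_zero]
  have hzmem : (0 : ℤ → ℂ) ∈ S := by
    refine ⟨⟨0, fun m _ => rfl⟩, fun k => ?_⟩
    apply finsum_eq_zero_of_forall_eq_zero
    intro m; simp
  have hsmul : ∀ (z : ℂ) (a : ℤ → ℂ), a ∈ S → z • a ∈ S := by
    rintro z a ⟨⟨Na, hNa⟩, hea⟩
    refine ⟨⟨Na, fun m hm => ?_⟩, fun k => ?_⟩
    · simp only [Pi.smul_apply, smul_eq_mul]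
      rw [hNa m hm]; ring
    · have hda : ∀ m, m < Na → (z • a) m = 0 := fun m hm => by
        simp only [Pi.smul_apply, smul_eq_mul]; rw [hNa m hm]; ring
      rw [fin_eq (z • a) Na k hda]
      have h1' := hea k; rw [fin_eq a Na k hNa] at h1'
      simp only [Pi.smul_apply, smul_eq_mul]
      calc ∑ m ∈ Finset.Icc Na k, z * a m * c k m
          = z * ∑ m ∈ Finset.Icc Na k, a m * c k m := by
            rw [Finset.mul_sum]; exact Finset.sum_congr rfl fun m _ => by ring
        _ = 0 := by rw [h1', mul_zero]
  set W : Submodule ℂ (ℤ → ℂ) :=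
    { carrier := S
      add_mem' := fun {a b} ha hb => hadd a b ha hb
      zero_mem' := hzmem
      smul_mem' := fun z a ha => hsmul z a ha } with hWdef
  have hmem : ∀ a : ℤ → ℂ, a ∈ W ↔ a ∈ S := fun a => Iff.rfl
  refine ⟨W, rfl, ?_, ?_⟩
  · -- rank = 1
    set φ : W →ₗ[ℂ] ℂ := (LinearMap.proj (0 : ℤ)).comp W.subtype with hφ
    have hinj : Function.Injective φ := by
      rw [injective_iff_map_eq_zero]
      intro x hx
      have : (x : ℤ → ℂ) = 0 := hzero x ((hmem x).mp x.2) hx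
      exact Subtype.ext this
    have hsurj : Function.Surjective φ := by
      intro z
      refine ⟨z • ⟨a0fun c, (hmem _).mpr ha0⟩, ?_⟩
      show z • a0fun c 0 = z
      rw [a0fun_zero, smul_eq_mul, mul_one]
    have := (LinearEquiv.ofBijective φ ⟨hinj, hsurj⟩).rank_eq
    rw [this, Module.rank_self]
  · intro a haW hane
    have haS : a ∈ S := (hmem a).mp haW
    refine ⟨hneg a haS, fun h0 => hane (hzero a haS h0)⟩
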